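/- Let d ≥ 1, and for each i ∈ {1,…,d} let ℓᵢ : ℝ → ℝ be convex and differentiable with L-Lipschitz derivative, let Mᵢ ∈ (0, M_K], and aᵢ⁺ = aᵢ - ηᵢ * Mᵢ * ℓᵢ'(aᵢ) with 0 < ηᵢ ≤ 1/(2 L M_K). Set η̃ = minᵢ ηᵢ. Then ∑ᵢ (ℓᵢ(aᵢ⁺) - ℓᵢ(aᵢ)) ≤ -(η̃/2) * ∑ᵢ Mᵢ * (ℓᵢ'(aᵢ))². -/

import Mathlib

lemma smooth_upper (f : ℝ → ℝ) (L : ℝ) (hL : 0 < L)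
    (hdiff : Differentiable ℝ f) (hlip : LipschitzWith (Real.toNNReal L) (deriv f))
    (x y : ℝ) : f y - f x ≤ deriv f x * (y - x) + L * (y - x) ^ 2 := by
  have key : ∀ c : ℝ, |deriv f c - deriv f x| ≤ L * |c - x| := by
    intro c
    have := hlip.dist_le_mul c x
    rwa [Real.dist_eq, Real.dist_eq, Real.coe_toNNReal L hL.le] at this
  rcases lt_trichotomy x y with h | h | h
  · obtain ⟨c, hc, hc'⟩ := exists_deriv_eq_slope f h hdiff.continuous.continuousOn
      hdiff.differentiableOn
    rw [eq_div_iff (by linarith : y - x ≠ 0)] at hc'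
    have h1 : f y - f x = deriv f c * (y - x) := hc'.symm
    have h2 := key c
    have h3 : |c - x| ≤ y - x := by
      rw [abs_of_nonneg (by linarith [hc.1])]
      linarith [hc.2]
    have h4 : deriv f c ≤ deriv f x + L * (y - x) := by
      have := (abs_le.mp h2).2
      nlinarith [abs_nonneg (c - x)]
    nlinarith
  · simp [h]
  · obtain ⟨c, hc, hc'⟩ := exists_deriv_eq_slope f h hdiff.continuous.continuousOn
      hdiff.differentiableOn
    rw [eq_div_iff (by linarith : x - y ≠ 0)] at hc'
    have h1 : f x - f y = deriv f c * (x - y) := hc'.symm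
    have h2 := key c
    have h3 : |c - x| ≤ x - y := by
      rw [abs_of_nonpos (by linarith [hc.2])]
      linarith [hc.1]
    have h4 : deriv f x - L * (x - y) ≤ deriv f c := by
      have := (abs_le.mp h2).1
      nlinarith [abs_nonneg (c - x)]
    nlinarith

/-- Multi-learner sufficient descent: `d` learners each take one gradient step
on their own convex `L`-smooth loss; the total loss decreases by at least
`(η̃/2) ∑ᵢ Mᵢ ℓᵢ'(aᵢ)²` where `η̃` is the smallest learning rate. -/
theorem stmt_4 {d : ℕ} (hd : 1 ≤ d) (ℓ : Fin d → ℝ → ℝ) (L MK : ℝ)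
    (M η a : Fin d → ℝ)
    (hconv : ∀ i, ConvexOn ℝ Set.univ (ℓ i))
    (hdiff : ∀ i, Differentiable ℝ (ℓ i))
    (hlip : ∀ i, LipschitzWith (Real.toNNReal L) (deriv (ℓ i)))
    (hL : 0 < L) (hMK : 0 < MK)
    (hM : ∀ i, 0 < M i ∧ M i ≤ MK)
    (hη : ∀ i, 0 < η i ∧ η i ≤ 1 / (2 * L * MK)) :
    ∑ i, (ℓ i (a i - η i * M i * deriv (ℓ i) (a i)) - ℓ i (a i))
      ≤ -((Finset.univ.inf' ⟨⟨0, hd⟩, Finset.mem_univ _⟩ η) / 2)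
          * ∑ i, M i * (deriv (ℓ i) (a i)) ^ 2 := by
  set ηt := Finset.univ.inf' ⟨⟨0, hd⟩, Finset.mem_univ _⟩ η with hηt
  rw [Finset.mul_sum]
  apply Finset.sum_le_sum
  intro i _
  set g := deriv (ℓ i) (a i)
  have hub := smooth_upper (ℓ i) L hL (hdiff i) (hlip i) (a i)
    (a i - η i * M i * g)
  have hηle : ηt ≤ η i := Finset.inf'_le _ (Finset.mem_univ i)
  have hηtpos : 0 < ηt := by
    rw [hηt]; refine (Finset.lt_inf'_iff _).2 ?_
    exact fun j _ => (hη j).1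
  obtain ⟨hMi, hMiK⟩ := hM i
  obtain ⟨hηi, hηiK⟩ := hη i
  have hLη : η i * (2 * L * MK) ≤ 1 := by
    rw [le_div_iff₀ (by positivity)] at hηiK
    linarith
  have hg2 : 0 ≤ g ^ 2 := sq_nonneg g
  nlinarith [sq_nonneg (η i * M i * g), mul_le_mul_of_nonneg_right hηle (mul_nonneg hMi.le hg2),
    mul_le_mul_of_nonneg_right hMiK hg2, mul_pos hηi hMi,
    mul_le_mul_of_nonneg_left hLη (mul_nonneg (mul_nonneg hηi.le hMi.le) hg2)]
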